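/- The polynomial x^4 - 2x^2y^2 + 81y^4 - 2x^2 - 16xy - 18y^2 + 1 is irreducible in Q[x,y]. -/

import Mathlib

open MvPolynomial

open Polynomial in
private lemma aux_monic2 {R : Type*} [Semiring R] {p : R[X]} (hm : p.Monic)
    (h2 : p.natDegree = 2) :
    p = Polynomial.X ^ 2 + Polynomial.C (p.coeff 1) * Polynomial.X + Polynomial.C (p.coeff 0) := by
  ext n
  have hlead : p.coeff 2 = 1 := by
    have := hm.coeff_natDegree
    rwa [h2] at this
  rcases n with _ | _ | _ | n
  · simp
  · simp
  · simp [hlead, Polynomial.coeff_X_pow]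
  · have h0 : p.coeff (n + 3) = 0 :=
      coeff_eq_zero_of_natDegree_lt (by omega)
    simp [h0, Polynomial.coeff_X_pow, Polynomial.coeff_C]

instance : Fact (Nat.Prime 7) := ⟨by norm_num⟩

open Polynomial in
private lemma q7_irred :
    Irreducible (Polynomial.X ^ 4 - 20 * Polynomial.X ^ 2 - 48 * Polynomial.X + 6400 : (ZMod 7)[X]) := by
  set q : (ZMod 7)[X] := Polynomial.X ^ 4 - 20 * Polynomial.X ^ 2 - 48 * Polynomial.X + 6400 with hq
  have hmon : q.Monic := by unfold q; monicity!
  have hdeg : q.natDegree = 4 := by unfold q; compute_degree!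
  have evalq : ∀ z : ZMod 7, Polynomial.eval z q = z ^ 4 - 20 * z ^ 2 - 48 * z + 6400 := by
    intro z; rw [hq]; simp
  have noroot : ∀ z : ZMod 7, z ^ 4 - 20 * z ^ 2 - 48 * z + 6400 ≠ 0 := by decide
  constructor
  · intro hu
    have := natDegree_eq_zero_of_isUnit hu
    omega
  · intro g h E
    by_contra hcon
    push_neg at hcon
    obtain ⟨hgU, hhU⟩ := hcon
    have hq0 : q ≠ 0 := hmon.ne_zero
    have hg0 : g ≠ 0 := by rintro rfl; rw [zero_mul] at E; exact hq0 E
    have hu0 : g.leadingCoeff ≠ 0 := leadingCoeff_ne_zero.mpr hg0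
    set g₁ : (ZMod 7)[X] := g * Polynomial.C g.leadingCoeff⁻¹ with hg₁
    set h₁ : (ZMod 7)[X] := Polynomial.C g.leadingCoeff * h with hh₁
    have hmg : g₁.Monic := by rw [hg₁]; exact monic_mul_leadingCoeff_inv hg0
    have E₁ : q = g₁ * h₁ := by
      rw [hg₁, hh₁, mul_assoc, ← mul_assoc (Polynomial.C g.leadingCoeff⁻¹), ← Polynomial.C_mul,
        inv_mul_cancel₀ hu0, Polynomial.C_1, one_mul, E]
    have hmh : h₁.Monic := hmg.of_mul_monic_left (E₁ ▸ hmon)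
    have hsum : g₁.natDegree + h₁.natDegree = 4 := by
      rw [← natDegree_mul hmg.ne_zero hmh.ne_zero, ← E₁, hdeg]
    have hgd1 : g₁.natDegree ≠ 0 := by
      intro h0
      have : g₁ = 1 := hmg.natDegree_eq_zero.mp h0
      rw [hg₁] at this
      have : g = Polynomial.C g.leadingCoeff := by
        have := congrArg (· * Polynomial.C g.leadingCoeff) this
        simpa [mul_assoc, ← Polynomial.C_mul, inv_mul_cancel₀ hu0] using this
      exact hgU (this ▸ isUnit_C.mpr (isUnit_iff_ne_zero.mpr hu0))
    have hhd1 : h₁.natDegree ≠ 0 := by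
      intro h0
      have : h₁ = 1 := hmh.natDegree_eq_zero.mp h0
      rw [hh₁] at this
      exact hhU (isUnit_of_mul_isUnit_right (this ▸ isUnit_one))
    have hgge : 1 ≤ g₁.natDegree := Nat.one_le_iff_ne_zero.mpr hgd1
    have hgle : g₁.natDegree ≤ 3 := by
      have := Nat.one_le_iff_ne_zero.mpr hhd1
      omega
    have key : ∀ b c d e : ZMod 7,
        ¬ (∀ t : ZMod 7, t ^ 4 - 20 * t ^ 2 - 48 * t + 6400 =
          (t ^ 2 + b * t + c) * (t ^ 2 + d * t + e)) := by decide
    have rootcase : ∀ p r : (ZMod 7)[X], p.Monic → p.natDegree = 1 → q = p * r → False := by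
      intro p r hpm hp1 hE
      have hp : p = Polynomial.X + Polynomial.C (p.coeff 0) := hpm.eq_X_add_C hp1
      have : Polynomial.eval (-(p.coeff 0)) q = 0 := by
        rw [hE, hp]; simp
      rw [evalq] at this
      exact noroot _ this
    interval_cases hgval : g₁.natDegree
    · exact rootcase g₁ h₁ hmg hgval E₁
    · have hh2 : h₁.natDegree = 2 := by omega
      have hgeq := aux_monic2 hmg hgval
      have hheq := aux_monic2 hmh hh2
      have E₂ : q = (Polynomial.X ^ 2 + Polynomial.C (g₁.coeff 1) * Polynomial.X + Polynomial.C (g₁.coeff 0)) *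
          (Polynomial.X ^ 2 + Polynomial.C (h₁.coeff 1) * Polynomial.X + Polynomial.C (h₁.coeff 0)) := by
        rw [E₁, ← hgeq, ← hheq]
      have hall : ∀ t : ZMod 7, t ^ 4 - 20 * t ^ 2 - 48 * t + 6400 =
          (t ^ 2 + g₁.coeff 1 * t + g₁.coeff 0) * (t ^ 2 + h₁.coeff 1 * t + h₁.coeff 0) := by
        intro t
        have := congrArg (Polynomial.eval t) E₂
        rw [evalq] at this
        simpa using this
      exact key _ _ _ _ hall
    · exact rootcase h₁ g₁ hmh (by omega) (by rw [E₁, mul_comm])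

open Polynomial in
private lemma qZ_irred :
    Irreducible (Polynomial.X ^ 4 - 20 * Polynomial.X ^ 2 - 48 * Polynomial.X + 6400 : ℤ[X]) := by
  have hmon : (Polynomial.X ^ 4 - 20 * Polynomial.X ^ 2 - 48 * Polynomial.X + 6400 : ℤ[X]).Monic := by monicity!
  apply hmon.irreducible_of_irreducible_map (Int.castRingHom (ZMod 7))
  have : Polynomial.map (Int.castRingHom (ZMod 7)) (Polynomial.X ^ 4 - 20 * Polynomial.X ^ 2 - 48 * Polynomial.X + 6400 : ℤ[X])
      = (Polynomial.X ^ 4 - 20 * Polynomial.X ^ 2 - 48 * Polynomial.X + 6400 : (ZMod 7)[X]) := by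
    simp
  rw [this]
  exact q7_irred

open Polynomial in
private lemma qQ_irred :
    Irreducible (Polynomial.X ^ 4 - 20 * Polynomial.X ^ 2 - 48 * Polynomial.X + 6400 : ℚ[X]) := by
  have hmon : (Polynomial.X ^ 4 - 20 * Polynomial.X ^ 2 - 48 * Polynomial.X + 6400 : ℤ[X]).Monic := by monicity!
  have := (hmon.irreducible_iff_irreducible_map_fraction_map (K := ℚ)).mp qZ_irred
  have heq : Polynomial.map (algebraMap ℤ ℚ) (Polynomial.X ^ 4 - 20 * Polynomial.X ^ 2 - 48 * Polynomial.X + 6400 : ℤ[X])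
      = (Polynomial.X ^ 4 - 20 * Polynomial.X ^ 2 - 48 * Polynomial.X + 6400 : ℚ[X]) := by
    simp
  rwa [heq] at this

private noncomputable def fX : Polynomial (MvPolynomial (Fin 1) ℚ) :=
  Polynomial.X ^ 4 - Polynomial.C (2 * X 0 ^ 2 + 2) * Polynomial.X ^ 2
    - Polynomial.C (16 * X 0) * Polynomial.X
    + Polynomial.C (81 * X 0 ^ 4 - 18 * X 0 ^ 2 + 1)

private noncomputable def evA : MvPolynomial (Fin 1) ℚ →+* ℚ :=
  MvPolynomial.eval (fun _ => (3 : ℚ))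

private lemma fX_monic : fX.Monic := by unfold fX; monicity!

private lemma fX_natDegree : fX.natDegree = 4 := by unfold fX; compute_degree!

open Polynomial in
private lemma fX_map : fX.map evA =
    (Polynomial.X ^ 4 - 20 * Polynomial.X ^ 2 - 48 * Polynomial.X + 6400 : ℚ[X]) := by
  unfold fX evA
  simp only [Polynomial.map_add, Polynomial.map_sub, Polynomial.map_mul, Polynomial.map_pow,
    Polynomial.map_C, Polynomial.map_X, map_add, map_sub, map_mul, map_pow, map_ofNat, map_one,
    MvPolynomial.eval_X]
  norm_num

open Polynomial in
private lemma fX_irred : Irreducible fX := by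
  constructor
  · intro hu
    have := hu.map (Polynomial.mapRingHom evA)
    simp only [Polynomial.coe_mapRingHom] at this
    rw [fX_map] at this
    exact qQ_irred.not_isUnit this
  · intro g h E
    by_contra hcon
    push_neg at hcon
    obtain ⟨hgU, hhU⟩ := hcon
    have hf0 : fX ≠ 0 := fX_monic.ne_zero
    have hg0 : g ≠ 0 := by rintro rfl; rw [zero_mul] at E; exact hf0 E
    have hh0 : h ≠ 0 := by rintro rfl; rw [mul_zero] at E; exact hf0 E
    have hlc : g.leadingCoeff * h.leadingCoeff = 1 := by
      rw [← Polynomial.leadingCoeff_mul, ← E, fX_monic.leadingCoeff]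
    have hug : IsUnit g.leadingCoeff := IsUnit.of_mul_eq_one _ hlc
    have huh : IsUnit h.leadingCoeff := IsUnit.of_mul_eq_one _ (by rwa [mul_comm] at hlc)
    rcases Nat.eq_zero_or_pos g.natDegree with hgz | hgpos
    · apply hgU
      have hgc : g = Polynomial.C (g.coeff 0) := Polynomial.eq_C_of_natDegree_eq_zero hgz
      have hcu : g.leadingCoeff = g.coeff 0 := by rw [Polynomial.leadingCoeff, hgz]
      rw [hgc]
      exact Polynomial.isUnit_C.mpr (hcu ▸ hug)
    rcases Nat.eq_zero_or_pos h.natDegree with hhz | hhpos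
    · apply hhU
      have hhc : h = Polynomial.C (h.coeff 0) := Polynomial.eq_C_of_natDegree_eq_zero hhz
      have hcu : h.leadingCoeff = h.coeff 0 := by rw [Polynomial.leadingCoeff, hhz]
      rw [hhc]
      exact Polynomial.isUnit_C.mpr (hcu ▸ huh)
    have hgne : evA g.leadingCoeff ≠ 0 := (hug.map evA).ne_zero
    have hhne : evA h.leadingCoeff ≠ 0 := (huh.map evA).ne_zero
    have hdg : (g.map evA).natDegree = g.natDegree :=
      Polynomial.natDegree_map_of_leadingCoeff_ne_zero evA hgne
    have hdh : (h.map evA).natDegree = h.natDegree :=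
      Polynomial.natDegree_map_of_leadingCoeff_ne_zero evA hhne
    have Emap : (Polynomial.X ^ 4 - 20 * Polynomial.X ^ 2 - 48 * Polynomial.X + 6400 : ℚ[X])
        = g.map evA * h.map evA := by
      rw [← fX_map, E, Polynomial.map_mul]
    rcases qQ_irred.isUnit_or_isUnit Emap with hu | hu
    · have := Polynomial.natDegree_eq_zero_of_isUnit hu
      omega
    · have := Polynomial.natDegree_eq_zero_of_isUnit hu
      omega

theorem X045_model_irreducible :
    Irreducible ((X 0)^4 - 2*(X 0)^2*(X 1)^2 + 81*(X 1)^4 - 2*(X 0)^2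
      - 16*(X 0)*(X 1) - 18*(X 1)^2 + 1 : MvPolynomial (Fin 2) ℚ) := by
  rw [← MulEquiv.irreducible_iff (finSuccEquiv ℚ 1)]
  have hPf : (finSuccEquiv ℚ 1) ((X 0)^4 - 2*(X 0)^2*(X 1)^2 + 81*(X 1)^4 - 2*(X 0)^2
      - 16*(X 0)*(X 1) - 18*(X 1)^2 + 1 : MvPolynomial (Fin 2) ℚ) = fX := by
    have h1 : (X 1 : MvPolynomial (Fin 2) ℚ) = X (Fin.succ 0) := rfl
    rw [h1]
    unfold fX
    simp only [map_add, map_sub, map_mul, map_pow, map_ofNat, map_one,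
      finSuccEquiv_X_zero, finSuccEquiv_X_succ, Polynomial.C_add, Polynomial.C_mul,
      Polynomial.C_pow, Polynomial.C_sub, Polynomial.C_1, map_ofNat]
    ring
  rw [hPf]
  exact fX_irred
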